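/- In the setting of the construction (r = sqrt(2 log n − log log n), y_i on S(r), y_i⁰ = (1+r^{−2})y_i, y_i¹,…,y_i^d vertices of a regular simplex of circumradius √2 centered at y_i in the tangent hyperplane H_i, Δ_i = conv(y_i⁰,…,y_i^d)), let 0 < c₂ < 1 be a fixed constant and for j ∈ {0,…,d} define the homothetic copy Δ_i^j := y_i^j + c₂·(Δ_i − y_i^j). Then for each i and each j ∈ {0,…,d}, vol_d(Δ_i^j) ≍ (log n)^{−1/2} and γ_d(Δ_i^j) ≍ n^{−1} as n → ∞, with implied constants depending only on d and c₂. -/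

import Mathlib

open MeasureTheory ProbabilityTheory Real Set Filter
open scoped ENNReal NNReal RealInnerProductSpace MeasureTheory

noncomputable section

abbrev Euc (d : ℕ) := EuclideanSpace ℝ (Fin d)

/-- The standard Gaussian measure `γ_d` on `ℝ^d`. -/
noncomputable def stdGaussian (d : ℕ) : Measure (Euc d) :=
  volume.withDensity fun x => ENNReal.ofReal ((2 * π) ^ (-(d : ℝ) / 2) * Real.exp (-‖x‖ ^ 2 / 2))

/-- The radius `r(n) = sqrt(2 log n − log log n)`. -/
noncomputable def rr (n : ℕ) : ℝ := Real.sqrt (2 * Real.log n - Real.log (Real.log n))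

/-- Configuration data for the simplex construction: `y` lies on the sphere of radius `r`,
and `yv 1, …, yv d` are the vertices of a regular `(d−1)`-dimensional simplex lying in the
tangent hyperplane of the sphere at `y`, with circumcentre `y` and circumradius `√2`. -/
structure SimplexConfig (d : ℕ) (r : ℝ) (y : Euc d) (yv : Fin d → Euc d) : Prop where
  norm_y : ‖y‖ = r
  mem_tangent : ∀ j, (inner ℝ (yv j) y : ℝ) = r ^ 2
  circumradius : ∀ j, ‖yv j - y‖ = Real.sqrt 2
  regular : ∃ s : ℝ, 0 < s ∧ ∀ j k : Fin d, j ≠ k → ‖yv j - yv k‖ = s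

/-- The apex `y⁰ = (1 + r^{−2}) y` of the simplex `Δ`. -/
noncomputable def apexPt {d : ℕ} (r : ℝ) (y : Euc d) : Euc d := (1 + (r ^ 2)⁻¹) • y

/-- The simplex `Δ = conv(y⁰, y¹, …, y^d)`. -/
noncomputable def simplexΔ {d : ℕ} (r : ℝ) (y : Euc d) (yv : Fin d → Euc d) : Set (Euc d) :=
  convexHull ℝ (insert (apexPt r y) (Set.range yv))

/-- The vertices of `Δ`: index `0` is the apex `y⁰`, index `j+1` is `y^{j+1}`. -/
noncomputable def vertexOf {d : ℕ} (r : ℝ) (y : Euc d) (yv : Fin d → Euc d) :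
    Fin (d + 1) → Euc d :=
  Fin.cons (apexPt r y) yv

/-- The homothetic copy `Δ^j := y^j + c₂ (Δ − y^j)` of `Δ` with centre the vertex `y^j` and
ratio `c₂`. -/
noncomputable def smallSimplex {d : ℕ} (c₂ r : ℝ) (y : Euc d) (yv : Fin d → Euc d)
    (j : Fin (d + 1)) : Set (Euc d) :=
  (fun x => vertexOf r y yv j + c₂ • (x - vertexOf r y yv j)) '' simplexΔ r y yv

/-- The positive hull `pos{v j}` of a finite family of vectors. -/
def posHull {d : ℕ} {ι : Type} [Fintype ι] (v : ι → Euc d) : Set (Euc d) :=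
  {x | ∃ c : ι → ℝ, (∀ i, 0 ≤ c i) ∧ x = ∑ i, c i • v i}

/-- The closed circular cone `C(z, α)` with apex `0`, axis `{tz : t ≥ 0}` and angle `α`,
i.e. the set of `x` with `∠(x,z) ≤ α` (together with the apex `0`). -/
def circCone {d : ℕ} (z : Euc d) (α : ℝ) : Set (Euc d) :=
  {x | Real.cos α * (‖x‖ * ‖z‖) ≤ (inner ℝ x z : ℝ)}


/-! ### Auxiliary lemmas -/

section Aux

lemma det_aux {d : ℕ} (a b : ℝ) (ha : a ≠ 0) :
    (Matrix.of fun j k : Fin d => (if j = k then a else 0) + b).det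
      = a ^ d * (1 + d * (b / a)) := by
  have h1 : (Matrix.of fun j k : Fin d => (if j = k then a else 0) + b)
      = a • (1 + Matrix.replicateCol Unit (fun _ => b / a) * Matrix.replicateRow Unit (fun _ => (1:ℝ))) := by
    ext j k
    by_cases h : j = k <;>
      simp [Matrix.one_apply, h, Matrix.mul_apply, mul_comm] <;> field_simp
  rw [h1, Matrix.det_smul, Matrix.det_one_add_replicateCol_mul_replicateRow]
  simp [dotProduct, mul_comm]

/-- Gram matrix of a family of vectors. -/
noncomputable def gram {d : ℕ} (v : Fin d → Euc d) : Matrix (Fin d) (Fin d) ℝ :=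
  Matrix.of fun j k => (inner ℝ (v j) (v k) : ℝ)

lemma det_constr_sq {d : ℕ} (v : Fin d → Euc d) :
    (LinearMap.det ((EuclideanSpace.basisFun (Fin d) ℝ).toBasis.constr ℕ v)) ^ 2
      = (gram v).det := by
  set bB := (EuclideanSpace.basisFun (Fin d) ℝ).toBasis
  set T := bB.constr ℕ v
  set A := LinearMap.toMatrix bB bB T with hA
  have hdet : LinearMap.det T = A.det := by rw [hA, LinearMap.det_toMatrix]
  have hAent : ∀ i j, A i j = v j i := by
    intro i j
    rw [hA, LinearMap.toMatrix_apply]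
    rw [show T (bB j) = v j from bB.constr_basis ℕ v j]
    simp [bB, EuclideanSpace.basisFun_repr]
  have hg : gram v = A.transpose * A := by
    ext j k
    simp only [Matrix.mul_apply, Matrix.transpose_apply, hAent, gram, Matrix.of_apply]
    rw [PiLp.inner_apply]
    simp [RCLike.inner_apply, mul_comm]
  rw [hdet, hg, Matrix.det_mul, Matrix.det_transpose, sq]

lemma gram_det_eq_zero {d : ℕ} (v : Fin d → Euc d) (g : Fin d → ℝ) (hg : g ≠ 0)
    (h : ∑ i, g i • v i = 0) : (gram v).det = 0 := by
  rw [← Matrix.exists_mulVec_eq_zero_iff]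
  refine ⟨g, hg, ?_⟩
  ext j
  have : ((gram v).mulVec g) j = (inner ℝ (v j) (∑ i, g i • v i) : ℝ) := by
    rw [inner_sum]
    simp only [Matrix.mulVec, dotProduct, gram, Matrix.of_apply, real_inner_smul_right]
    exact Finset.sum_congr rfl (fun x _ => mul_comm _ _)
  rw [this, h, inner_zero_right]
  rfl

end Aux


section ConfigFacts

variable {d : ℕ} {r : ℝ} {y : Euc d} {yv : Fin d → Euc d}

lemma SimplexConfig.inner_yy (cfg : SimplexConfig d r y yv) : (inner ℝ y y : ℝ) = r ^ 2 := by
  rw [real_inner_self_eq_norm_sq, cfg.norm_y]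

lemma SimplexConfig.inner_wy (cfg : SimplexConfig d r y yv) (j : Fin d) :
    (inner ℝ (yv j - y) y : ℝ) = 0 := by
  rw [inner_sub_left, cfg.mem_tangent, cfg.inner_yy, sub_self]

lemma SimplexConfig.gram_v_det (hd : 1 ≤ d) (hr : 0 < r) (cfg : SimplexConfig d r y yv) :
    2 ≤ d ∧ (gram fun j => yv j - apexPt r y).det
      = (2 * d / ((d : ℝ) - 1)) ^ (d - 1) * d / r ^ 2 := by
  obtain ⟨s, hs, hreg⟩ := cfg.regular
  set t : ℝ := s ^ 2 / 2 with ht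
  have ht0' : 0 < t := by positivity
  have ht0 : t ≠ 0 := ne_of_gt ht0'
  have hr2 : (r : ℝ) ^ 2 ≠ 0 := by positivity
  have hww : ∀ j k, (inner ℝ (yv j - y) (yv k - y) : ℝ) = (if j = k then t else 0) + (2 - t) := by
    intro j k
    by_cases h : j = k
    · subst h
      rw [real_inner_self_eq_norm_sq, cfg.circumradius, Real.sq_sqrt (by norm_num : (2:ℝ) ≥ 0)]
      rw [if_pos rfl]; ring
    · have hnorm : ‖(yv j - y) - (yv k - y)‖ = s := by
        rw [sub_sub_sub_cancel_right]; exact hreg j k h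
      have h2 : ‖(yv j - y) - (yv k - y)‖ ^ 2
          = ‖yv j - y‖ ^ 2 - 2 * (inner ℝ (yv j - y) (yv k - y) : ℝ) + ‖yv k - y‖ ^ 2 := by
        rw [norm_sub_sq_real]
      rw [hnorm, cfg.circumradius, cfg.circumradius, Real.sq_sqrt (by norm_num : (2:ℝ) ≥ 0)] at h2
      simp only [if_neg h]
      nlinarith [h2]
  -- linear dependence of y together with the w's
  have hcard : ¬ LinearIndependent ℝ (Fin.cons y (fun j => yv j - y) : Fin (d+1) → Euc d) := by
    intro hli
    have h1 := hli.fintype_card_le_finrank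
    rw [finrank_euclideanSpace_fin, Fintype.card_fin] at h1
    omega
  obtain ⟨g, hsum, i, hgi⟩ := Fintype.not_linearIndependent_iff.1 hcard
  have hg0 : g 0 = 0 := by
    have h1 : (inner ℝ (∑ i, g i • (Fin.cons y (fun j => yv j - y) : Fin (d+1) → Euc d) i) y : ℝ)
        = 0 := by rw [hsum, inner_zero_left]
    rw [sum_inner, Fin.sum_univ_succ] at h1
    simp only [Fin.cons_zero, Fin.cons_succ, real_inner_smul_left, cfg.inner_wy, cfg.inner_yy,
      mul_zero, Finset.sum_const_zero, add_zero] at h1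
    exact by
      have : g 0 * r ^ 2 = 0 := h1
      rcases mul_eq_zero.1 this with h | h
      · exact h
      · exact absurd h hr2
  have hsum' : ∑ j : Fin d, g j.succ • (yv j - y) = 0 := by
    have h2 := hsum
    rw [Fin.sum_univ_succ] at h2
    simpa [Fin.cons_zero, Fin.cons_succ, hg0] using h2
  have hgne : (fun j : Fin d => g j.succ) ≠ 0 := by
    have hine : i ≠ 0 := by rintro rfl; exact hgi hg0
    obtain ⟨j, rfl⟩ := Fin.eq_succ_of_ne_zero hine
    intro hzero
    exact hgi (congrFun hzero j)
  have hW0 : (gram fun j => yv j - y).det = 0 :=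
    gram_det_eq_zero _ _ hgne hsum'
  have hWdet : (gram fun j => yv j - y).det = t ^ d * (1 + d * ((2 - t) / t)) := by
    have hWeq : (gram fun j => yv j - y)
        = Matrix.of fun j k => (if j = k then t else 0) + (2 - t) := by
      ext j k; exact hww j k
    rw [hWeq, det_aux _ _ ht0]
  have h1 : 1 + (d : ℝ) * ((2 - t) / t) = 0 := by
    rcases mul_eq_zero.1 (hWdet ▸ hW0) with h | h
    · exact absurd h (pow_ne_zero _ ht0)
    · exact h
  have hkey : t + (d : ℝ) * (2 - t) = 0 := by
    have h2 : t * (1 + (d : ℝ) * ((2 - t) / t)) = t + (d : ℝ) * (2 - t) := by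
      field_simp
    rw [h1, mul_zero] at h2; linarith
  have hd2 : 2 ≤ d := by
    by_contra h
    have hd1 : d = 1 := by omega
    rw [hd1] at hkey; norm_num at hkey
  have hd1R : (d : ℝ) - 1 ≠ 0 := by
    have : (2 : ℝ) ≤ (d : ℝ) := by exact_mod_cast hd2
    linarith
  have htval : t = 2 * d / ((d : ℝ) - 1) := by
    rw [eq_div_iff hd1R]; nlinarith [hkey]
  refine ⟨hd2, ?_⟩
  -- now the gram matrix of the v's
  have hv : ∀ j, yv j - apexPt r y = (yv j - y) - (r ^ 2)⁻¹ • y := by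
    intro j
    rw [apexPt, add_smul, one_smul]
    abel
  have hvv : ∀ j k, (inner ℝ (yv j - apexPt r y) (yv k - apexPt r y) : ℝ)
      = (if j = k then t else 0) + (2 - t + (r ^ 2)⁻¹) := by
    intro j k
    have hwy' : (inner ℝ y (yv k - y) : ℝ) = 0 := by
      rw [real_inner_comm]; exact cfg.inner_wy k
    have expand : (inner ℝ (yv j - apexPt r y) (yv k - apexPt r y) : ℝ)
        = (inner ℝ (yv j - y) (yv k - y) : ℝ) - (r ^ 2)⁻¹ * (inner ℝ (yv j - y) y : ℝ)
          - (r ^ 2)⁻¹ * (inner ℝ y (yv k - y) : ℝ)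
          + (r ^ 2)⁻¹ * ((r ^ 2)⁻¹ * (inner ℝ y y : ℝ)) := by
      rw [hv j, hv k]
      simp only [inner_sub_left, inner_sub_right, real_inner_smul_left, real_inner_smul_right]
      ring
    rw [expand, hww j k, cfg.inner_wy j, hwy', cfg.inner_yy]
    split_ifs <;> field_simp <;> ring
  have hGeq : (gram fun j => yv j - apexPt r y)
      = Matrix.of fun j k => (if j = k then t else 0) + (2 - t + (r ^ 2)⁻¹) := by
    ext j k; exact hvv j k
  rw [hGeq, det_aux _ _ ht0]
  have h3 : (1 + (d : ℝ) * ((2 - t + (r ^ 2)⁻¹) / t)) * t = (d : ℝ) * (r ^ 2)⁻¹ := by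
    have h4 : (1 + (d : ℝ) * ((2 - t + (r ^ 2)⁻¹) / t)) * t
        = (t + (d : ℝ) * (2 - t)) + (d : ℝ) * (r ^ 2)⁻¹ := by
      field_simp
      ring
    rw [h4, hkey, zero_add]
  have hpow : t ^ d = t ^ (d - 1) * t := by
    rw [← pow_succ]; congr 1; omega
  calc t ^ d * (1 + (d : ℝ) * ((2 - t + (r ^ 2)⁻¹) / t))
      = t ^ (d - 1) * ((1 + (d : ℝ) * ((2 - t + (r ^ 2)⁻¹) / t)) * t) := by rw [hpow]; ring
    _ = t ^ (d - 1) * ((d : ℝ) * (r ^ 2)⁻¹) := by rw [h3]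
    _ = (2 * d / ((d : ℝ) - 1)) ^ (d - 1) * d / r ^ 2 := by rw [← htval]; ring

end ConfigFacts


section Volume

/-- The reference simplex: convex hull of `0` and the standard basis vectors. -/
noncomputable def baseSimplex (d : ℕ) : Set (Euc d) :=
  convexHull ℝ (insert (0 : Euc d) (Set.range ⇑(EuclideanSpace.basisFun (Fin d) ℝ).toBasis))

noncomputable def kapp (d : ℕ) : ℝ≥0∞ := volume (baseSimplex d)

/-- The dimensional constant in the volume of `Δ`: `vol(Δ) = Cdim d * kapp d / r`. -/
noncomputable def Cdim (d : ℕ) : ℝ := Real.sqrt ((2 * d / ((d : ℝ) - 1)) ^ (d - 1) * d)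

lemma kapp_lt_top (d : ℕ) : kapp d < ⊤ := by
  have h : IsCompact (baseSimplex d) :=
    (((Set.finite_range _).insert _).isCompact_convexHull ℝ)
  exact h.measure_lt_top

lemma kapp_pos (d : ℕ) : 0 < kapp d := by
  have hne : (interior (baseSimplex d)).Nonempty := by
    rw [baseSimplex, interior_convexHull_nonempty_iff_affineSpan_eq_top]
    rw [AffineSubspace.affineSpan_eq_top_iff_vectorSpan_eq_top_of_nonempty ℝ (Euc d) (Euc d)
      (Set.insert_nonempty _ _)]
    rw [eq_top_iff, ← (EuclideanSpace.basisFun (Fin d) ℝ).toBasis.span_eq, Submodule.span_le]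
    rintro x ⟨j, rfl⟩
    have := vsub_mem_vectorSpan ℝ
      (Set.mem_insert_of_mem _ (Set.mem_range_self j))
      (Set.mem_insert (0 : Euc d) (Set.range ⇑(EuclideanSpace.basisFun (Fin d) ℝ).toBasis))
    simpa using this
  exact MeasureTheory.Measure.measure_pos_of_nonempty_interior _ hne

lemma volume_translate {d : ℕ} (a : Euc d) (s : Set (Euc d)) :
    volume ((fun x => x + a) '' s) = volume s := by
  have h : (fun x : Euc d => x + a) '' s = (fun x => x + -a) ⁻¹' s := by
    ext z; simp [Set.mem_image, eq_comm, sub_eq_iff_eq_add, neg_add_eq_sub]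
  rw [h, measure_preimage_add_right]

lemma Cdim_pos {d : ℕ} (hd : 2 ≤ d) : 0 < Cdim d := by
  have h1 : (0 : ℝ) < (d : ℝ) - 1 := by
    have : (2 : ℝ) ≤ (d : ℝ) := by exact_mod_cast hd
    linarith
  have h2 : (0 : ℝ) < (d : ℝ) := by positivity
  apply Real.sqrt_pos.2
  positivity

lemma volume_simplexΔ {d : ℕ} {r : ℝ} {y : Euc d} {yv : Fin d → Euc d}
    (hd : 1 ≤ d) (hr : 0 < r) (cfg : SimplexConfig d r y yv) :
    volume (simplexΔ r y yv) = ENNReal.ofReal (Cdim d / r) * kapp d := by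
  set bB := (EuclideanSpace.basisFun (Fin d) ℝ).toBasis with hbB
  set v : Fin d → Euc d := fun j => yv j - apexPt r y with hv
  set T := bB.constr ℕ v with hT
  set f : Euc d →ᵃ[ℝ] Euc d :=
    AffineMap.mk' (fun x => T x + apexPt r y) T 0 (by intro p; simp) with hf
  have hfap : ∀ x, f x = T x + apexPt r y := fun x => rfl
  have him : simplexΔ r y yv = f '' baseSimplex d := by
    rw [baseSimplex, AffineMap.image_convexHull, Set.image_insert_eq, ← Set.range_comp]
    have h0 : f 0 = apexPt r y := by rw [hfap]; simp
    have h1 : ⇑f ∘ ⇑bB = yv := by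
      funext j
      rw [Function.comp_apply, hfap, show T (bB j) = v j from bB.constr_basis ℕ v j, hv]
      simp
    rw [h0, h1, simplexΔ]
  have hvol : volume (f '' baseSimplex d)
      = ENNReal.ofReal |LinearMap.det T| * kapp d := by
    have hcomp : ⇑f '' baseSimplex d = (fun x => x + apexPt r y) '' (⇑T '' baseSimplex d) := by
      rw [← Set.image_comp]; rfl
    rw [hcomp, volume_translate, MeasureTheory.Measure.addHaar_image_linearMap, kapp]
  have hdet : |LinearMap.det T| = Cdim d / r := by
    have h2 := (cfg.gram_v_det hd hr).2
    have hd2 := (cfg.gram_v_det hd hr).1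
    have hsq : (LinearMap.det T) ^ 2 = (2 * d / ((d : ℝ) - 1)) ^ (d - 1) * d / r ^ 2 := by
      rw [hT, det_constr_sq, hv]; exact h2
    have hnn : (0 : ℝ) ≤ (2 * d / ((d : ℝ) - 1)) ^ (d - 1) * d := by
      have h1 : (0 : ℝ) < (d : ℝ) - 1 := by
        have : (2 : ℝ) ≤ (d : ℝ) := by exact_mod_cast hd2
        linarith
      positivity
    rw [← Real.sqrt_sq_eq_abs, hsq, Real.sqrt_div hnn, Real.sqrt_sq hr.le, Cdim]
  rw [him, hvol, hdet]

end Volume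



section Small

variable {d : ℕ} {c₂ r : ℝ} {y : Euc d} {yv : Fin d → Euc d}

lemma smallSimplex_eq_homothety (j : Fin (d + 1)) :
    smallSimplex c₂ r y yv j
      = AffineMap.homothety (vertexOf r y yv j) c₂ '' simplexΔ r y yv := by
  have hfun : (fun x => vertexOf r y yv j + c₂ • (x - vertexOf r y yv j))
      = ⇑(AffineMap.homothety (vertexOf r y yv j) c₂) := by
    funext x
    rw [AffineMap.homothety_apply]
    simp only [vsub_eq_sub, vadd_eq_add]
    abel
  rw [smallSimplex, hfun]

lemma volume_smallSimplex (j : Fin (d + 1)) :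
    volume (smallSimplex c₂ r y yv j)
      = ENNReal.ofReal |c₂ ^ d| * volume (simplexΔ r y yv) := by
  rw [smallSimplex_eq_homothety, MeasureTheory.Measure.addHaar_image_homothety,
    finrank_euclideanSpace_fin]

lemma vertexOf_mem (j : Fin (d + 1)) : vertexOf r y yv j ∈ simplexΔ r y yv := by
  apply subset_convexHull
  refine Fin.cases ?_ ?_ j
  · rw [vertexOf, Fin.cons_zero]; exact Set.mem_insert _ _
  · intro k; rw [vertexOf, Fin.cons_succ]; exact Set.mem_insert_of_mem _ (Set.mem_range_self k)

lemma smallSimplex_subset (hc₂0 : 0 ≤ c₂) (hc₂1 : c₂ ≤ 1) (j : Fin (d + 1)) :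
    smallSimplex c₂ r y yv j ⊆ simplexΔ r y yv := by
  rintro _ ⟨x, hx, rfl⟩
  have hp := vertexOf_mem (r := r) (y := y) (yv := yv) j
  have hconv : Convex ℝ (simplexΔ r y yv) := convex_convexHull _ _
  have h := hconv hp hx (by linarith : (0:ℝ) ≤ 1 - c₂) hc₂0 (by ring)
  have heq : vertexOf r y yv j + c₂ • (x - vertexOf r y yv j)
      = (1 - c₂) • vertexOf r y yv j + c₂ • x := by
    rw [smul_sub, sub_smul, one_smul]; abel
  show (fun x => vertexOf r y yv j + c₂ • (x - vertexOf r y yv j)) x ∈ simplexΔ r y yv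
  simp only []
  rw [heq]; exact h

lemma isCompact_simplexΔ : IsCompact (simplexΔ r y yv) :=
  ((Set.finite_range yv).insert _).isCompact_convexHull ℝ

lemma measurableSet_smallSimplex (j : Fin (d + 1)) :
    MeasurableSet (smallSimplex c₂ r y yv j) := by
  have hcont : Continuous fun x : Euc d =>
      vertexOf r y yv j + c₂ • (x - vertexOf r y yv j) :=
    continuous_const.add ((continuous_id.sub continuous_const).const_smul c₂)
  exact ((isCompact_simplexΔ.image hcont).isClosed).measurableSet

lemma mem_simplexΔ_inner_ge (hr : 0 < r) (cfg : SimplexConfig d r y yv)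
    {x : Euc d} (hx : x ∈ simplexΔ r y yv) : r ^ 2 ≤ (inner ℝ x y : ℝ) := by
  have hlin : IsLinearMap ℝ (fun x : Euc d => (inner ℝ x y : ℝ)) :=
    ⟨fun u v => inner_add_left u v y, fun c u => real_inner_smul_left u y c⟩
  have hsub : simplexΔ r y yv ⊆ {w : Euc d | r ^ 2 ≤ (inner ℝ w y : ℝ)} := by
    apply convexHull_min ?_ (convex_halfSpace_ge hlin (r ^ 2))
    rintro w (rfl | ⟨k, rfl⟩)
    · show r ^ 2 ≤ (inner ℝ (apexPt r y) y : ℝ)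
      rw [apexPt, real_inner_smul_left, cfg.inner_yy]
      have h1 : (0:ℝ) < r ^ 2 := by positivity
      nlinarith [inv_pos.2 h1]
    · show r ^ 2 ≤ (inner ℝ (yv k) y : ℝ)
      rw [cfg.mem_tangent]
  exact hsub hx

lemma mem_simplexΔ_norm_sq_le (hr : 1 ≤ r) (cfg : SimplexConfig d r y yv)
    {x : Euc d} (hx : x ∈ simplexΔ r y yv) : ‖x‖ ^ 2 ≤ r ^ 2 + 3 := by
  have hr0 : (0:ℝ) < r := lt_of_lt_of_le one_pos hr
  have hr2 : (0:ℝ) < r ^ 2 := by positivity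
  have hR : (0:ℝ) ≤ r ^ 2 + 3 := by positivity
  have hsub : simplexΔ r y yv ⊆ Metric.closedBall 0 (Real.sqrt (r ^ 2 + 3)) := by
    apply convexHull_min ?_ (convex_closedBall _ _)
    rintro w (rfl | ⟨k, rfl⟩) <;> rw [Metric.mem_closedBall, dist_zero_right]
    · -- apex
      have hnorm : ‖apexPt r y‖ = (1 + (r ^ 2)⁻¹) * r := by
        rw [apexPt, norm_smul, cfg.norm_y, Real.norm_eq_abs, abs_of_pos (by positivity)]
      rw [hnorm, show Real.sqrt (r ^ 2 + 3) = Real.sqrt (r ^ 2 + 3) from rfl]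
      have hsq : ((1 + (r ^ 2)⁻¹) * r) ^ 2 ≤ r ^ 2 + 3 := by
        have hinv : (r ^ 2)⁻¹ ≤ 1 := by
          rw [inv_le_one_iff₀]; right; nlinarith
        have hexp : ((1 + (r ^ 2)⁻¹) * r) ^ 2 = r ^ 2 + 2 + (r ^ 2)⁻¹ := by
          field_simp; ring
        rw [hexp]; linarith
      nlinarith [Real.sq_sqrt hR, Real.sqrt_nonneg (r ^ 2 + 3), mul_pos (by positivity : (0:ℝ) < 1 + (r^2)⁻¹) hr0]
    · -- base vertex
      have hnormsq : ‖yv k‖ ^ 2 = r ^ 2 + 2 := by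
        have h2 : ‖yv k - y‖ ^ 2
            = ‖yv k‖ ^ 2 - 2 * (inner ℝ (yv k) y : ℝ) + ‖y‖ ^ 2 := norm_sub_sq_real _ _
        rw [cfg.circumradius, Real.sq_sqrt (by norm_num : (2:ℝ) ≥ 0), cfg.mem_tangent,
          cfg.norm_y] at h2
        linarith
      have hsq : ‖yv k‖ ^ 2 ≤ r ^ 2 + 3 := by rw [hnormsq]; linarith
      nlinarith [Real.sq_sqrt hR, Real.sqrt_nonneg (r ^ 2 + 3), norm_nonneg (yv k)]
  have hx' := hsub hx
  rw [Metric.mem_closedBall, dist_zero_right] at hx'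
  nlinarith [Real.sq_sqrt hR, norm_nonneg x]

lemma mem_simplexΔ_norm_sq_ge (hr : 0 < r) (cfg : SimplexConfig d r y yv)
    {x : Euc d} (hx : x ∈ simplexΔ r y yv) : r ^ 2 ≤ ‖x‖ ^ 2 := by
  have h1 := mem_simplexΔ_inner_ge hr cfg hx
  have h2 : (inner ℝ x y : ℝ) ≤ ‖x‖ * ‖y‖ := real_inner_le_norm x y
  rw [cfg.norm_y] at h2
  nlinarith [norm_nonneg x]

end Small


section Gauss

lemma stdGaussian_le_const {d : ℕ} {s : Set (Euc d)} (hs : MeasurableSet s) {M : ℝ}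
    (hb : ∀ x ∈ s, (2 * π) ^ (-(d : ℝ) / 2) * Real.exp (-‖x‖ ^ 2 / 2) ≤ M) :
    stdGaussian d s ≤ ENNReal.ofReal M * volume s := by
  rw [_root_.stdGaussian, MeasureTheory.withDensity_apply _ hs, ← setLIntegral_const]
  exact setLIntegral_mono' hs fun x hx => ENNReal.ofReal_le_ofReal (hb x hx)

lemma const_le_stdGaussian {d : ℕ} {s : Set (Euc d)} (hs : MeasurableSet s) {m : ℝ}
    (hb : ∀ x ∈ s, m ≤ (2 * π) ^ (-(d : ℝ) / 2) * Real.exp (-‖x‖ ^ 2 / 2)) :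
    ENNReal.ofReal m * volume s ≤ stdGaussian d s := by
  rw [_root_.stdGaussian, MeasureTheory.withDensity_apply _ hs, ← setLIntegral_const]
  exact setLIntegral_mono' hs fun x hx => ENNReal.ofReal_le_ofReal (hb x hx)

end Gauss

lemma Cdim_pos' {d : ℕ} (hd : 1 ≤ d) : 0 < Cdim d := by
  rcases eq_or_lt_of_le hd with h | h
  · rw [Cdim, ← h]; norm_num
  · exact Cdim_pos h

/-- Each homothetic copy `Δ^j = y^j + c₂(Δ − y^j)` has Lebesgue volume of order
`(log n)^{−1/2}` and Gaussian measure of order `n^{−1}`. -/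
theorem small_simplex_volume_and_gaussian_measure (d : ℕ) (hd : 1 ≤ d)
    (c₂ : ℝ) (hc₂ : 0 < c₂) (hc₂' : c₂ < 1) :
    ∃ a₁ b₁ a₂ b₂ : ℝ, 0 < a₁ ∧ 0 < b₁ ∧ 0 < a₂ ∧ 0 < b₂ ∧ ∃ N : ℕ, ∀ n : ℕ, N ≤ n →
      ∀ (y : Euc d) (yv : Fin d → Euc d), SimplexConfig d (rr n) y yv →
        ∀ j : Fin (d + 1),
          (a₁ * Real.log n ^ (-(1 : ℝ) / 2) ≤
              (volume (smallSimplex c₂ (rr n) y yv j)).toReal ∧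
            (volume (smallSimplex c₂ (rr n) y yv j)).toReal ≤
              b₁ * Real.log n ^ (-(1 : ℝ) / 2)) ∧
          (a₂ / n ≤ (stdGaussian d (smallSimplex c₂ (rr n) y yv j)).toReal ∧
            (stdGaussian d (smallSimplex c₂ (rr n) y yv j)).toReal ≤ b₂ / n) := by
  have hκ0 : 0 < (kapp d).toReal := ENNReal.toReal_pos (kapp_pos d).ne' (kapp_lt_top d).ne
  have hCd : 0 < Cdim d := Cdim_pos' hd
  set K : ℝ := c₂ ^ d * Cdim d * (kapp d).toReal with hK
  have hK0 : 0 < K := by positivity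
  set C₀ : ℝ := (2 * π) ^ (-(d : ℝ) / 2) with hC₀
  have hC₀0 : 0 < C₀ := Real.rpow_pos_of_pos (by positivity) _
  refine ⟨K / Real.sqrt 2, K, Real.exp (-(3:ℝ)/2) * C₀ * K / Real.sqrt 2, C₀ * K,
    by positivity, hK0, by positivity, by positivity, 3, ?_⟩
  intro n hn y yv cfg j
  set L : ℝ := Real.log n with hLdef
  have hn3 : (3:ℝ) ≤ (n:ℝ) := by exact_mod_cast hn
  have hn0 : (0:ℝ) < (n:ℝ) := by linarith
  have hL1 : 1 ≤ L := by
    rw [hLdef]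
    have h1 : Real.log (Real.exp 1) ≤ Real.log n := by
      apply Real.log_le_log (Real.exp_pos 1)
      calc Real.exp 1 ≤ 2.7182818286 := Real.exp_one_lt_d9.le
        _ ≤ (n:ℝ) := by linarith
    simpa using h1
  have hL0 : (0:ℝ) < L := by linarith
  have hlogL0 : 0 ≤ Real.log L := Real.log_nonneg hL1
  have hlogLL : Real.log L ≤ L := by
    calc Real.log L ≤ L - 1 := Real.log_le_sub_one_of_pos hL0
      _ ≤ L := by linarith
  have harg : 0 ≤ 2 * L - Real.log L := by linarith
  have hrsq : rr n ^ 2 = 2 * L - Real.log L := by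
    rw [rr, ← hLdef, Real.sq_sqrt harg]
  have hr_lb : L ≤ rr n ^ 2 := by rw [hrsq]; linarith
  have hr_ub : rr n ^ 2 ≤ 2 * L := by rw [hrsq]; linarith
  have hrr0 : 0 ≤ rr n := Real.sqrt_nonneg _
  have hr1 : 1 ≤ rr n := by nlinarith
  have hr0 : 0 < rr n := by linarith
  have hsL0 : 0 < Real.sqrt L := Real.sqrt_pos.2 hL0
  have hsL_le : Real.sqrt L ≤ rr n := by
    rw [show rr n = Real.sqrt (rr n ^ 2) from (Real.sqrt_sq hrr0).symm]
    exact Real.sqrt_le_sqrt hr_lb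
  have hsL_ge : rr n ≤ Real.sqrt 2 * Real.sqrt L := by
    rw [show rr n = Real.sqrt (rr n ^ 2) from (Real.sqrt_sq hrr0).symm,
      ← Real.sqrt_mul (by norm_num : (0:ℝ) ≤ 2)]
    exact Real.sqrt_le_sqrt hr_ub
  -- volume computation
  have hvol : volume (smallSimplex c₂ (rr n) y yv j)
      = ENNReal.ofReal (c₂ ^ d * (Cdim d / rr n)) * kapp d := by
    rw [volume_smallSimplex j, volume_simplexΔ hd hr0 cfg, ← mul_assoc,
      abs_of_pos (by positivity : (0:ℝ) < c₂ ^ d),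
      ← ENNReal.ofReal_mul (by positivity)]
  have hvolR : (volume (smallSimplex c₂ (rr n) y yv j)).toReal = K / rr n := by
    rw [hvol, ENNReal.toReal_mul, ENNReal.toReal_ofReal (by positivity), hK]
    field_simp
  have hvol_fin : volume (smallSimplex c₂ (rr n) y yv j) < ⊤ := by
    rw [hvol]
    exact ENNReal.mul_lt_top ENNReal.ofReal_lt_top (kapp_lt_top d)
  have hLrpow : Real.log ↑n ^ (-(1:ℝ)/2) = (Real.sqrt L)⁻¹ := by
    rw [← hLdef, show (-(1:ℝ)/2) = -(1/2 : ℝ) by norm_num, Real.rpow_neg hL0.le,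
      ← Real.sqrt_eq_rpow]
  constructor
  · constructor
    · rw [hvolR, hLrpow]
      have h1 : K / Real.sqrt 2 * (Real.sqrt L)⁻¹ = K / (Real.sqrt 2 * Real.sqrt L) := by
        field_simp
      rw [h1]
      gcongr
    · rw [hvolR, hLrpow]
      have h1 : K * (Real.sqrt L)⁻¹ = K / Real.sqrt L := by field_simp
      rw [h1]
      gcongr
  · -- Gaussian measure
    have hmeas : MeasurableSet (smallSimplex c₂ (rr n) y yv j) := measurableSet_smallSimplex j
    have hsub : smallSimplex c₂ (rr n) y yv j ⊆ simplexΔ (rr n) y yv :=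
      smallSimplex_subset hc₂.le hc₂'.le j
    have hub : ∀ x ∈ smallSimplex c₂ (rr n) y yv j,
        (2*π) ^ (-(d:ℝ)/2) * Real.exp (-‖x‖^2/2) ≤ C₀ * Real.exp (-(rr n ^ 2)/2) := by
      intro x hx
      have h1 := mem_simplexΔ_norm_sq_ge hr0 cfg (hsub hx)
      rw [← hC₀]
      apply mul_le_mul_of_nonneg_left _ hC₀0.le
      apply Real.exp_le_exp.2
      linarith
    have hlb : ∀ x ∈ smallSimplex c₂ (rr n) y yv j,
        C₀ * Real.exp (-(rr n ^ 2 + 3)/2) ≤ (2*π) ^ (-(d:ℝ)/2) * Real.exp (-‖x‖^2/2) := by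
      intro x hx
      have h1 := mem_simplexΔ_norm_sq_le hr1 cfg (hsub hx)
      rw [← hC₀]
      apply mul_le_mul_of_nonneg_left _ hC₀0.le
      apply Real.exp_le_exp.2
      linarith
    have hup := stdGaussian_le_const hmeas hub
    have hlo := const_le_stdGaussian hmeas hlb
    have hexpL : Real.exp (-(rr n ^ 2)/2) = Real.sqrt L / n := by
      rw [hrsq, show -(2*L - Real.log L)/2 = -L + Real.log L/2 by ring, Real.exp_add]
      rw [show Real.log L / 2 = Real.log (Real.sqrt L) from (Real.log_sqrt hL0.le).symm,
        Real.exp_log hsL0, Real.exp_neg, hLdef, Real.exp_log hn0]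
      ring
    have hγ_fin : stdGaussian d (smallSimplex c₂ (rr n) y yv j) ≠ ⊤ :=
      (lt_of_le_of_lt hup (ENNReal.mul_lt_top ENNReal.ofReal_lt_top hvol_fin)).ne
    have hs2 : (0:ℝ) < Real.sqrt 2 := by positivity
    constructor
    · -- lower bound
      have h0 : (ENNReal.ofReal (C₀ * Real.exp (-(rr n ^ 2 + 3)/2))
            * volume (smallSimplex c₂ (rr n) y yv j)).toReal
          ≤ (stdGaussian d (smallSimplex c₂ (rr n) y yv j)).toReal :=
        ENNReal.toReal_mono hγ_fin hlo
      rw [ENNReal.toReal_mul, ENNReal.toReal_ofReal (by positivity), hvolR] at h0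
      refine le_trans ?_ h0
      have hexp3 : Real.exp (-(rr n ^ 2 + 3)/2) = Real.exp (-(3:ℝ)/2) * (Real.sqrt L / n) := by
        rw [show -(rr n ^ 2 + 3)/2 = -(3:ℝ)/2 + (-(rr n ^ 2)/2) by ring, Real.exp_add, hexpL]
      rw [hexp3]
      have h2 : C₀ * (Real.exp (-(3:ℝ)/2) * (Real.sqrt L / n)) * (K / (Real.sqrt 2 * Real.sqrt L))
          ≤ C₀ * (Real.exp (-(3:ℝ)/2) * (Real.sqrt L / n)) * (K / rr n) := by
        gcongr
      refine le_trans (le_of_eq ?_) h2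
      field_simp
    · -- upper bound
      have h1 : (stdGaussian d (smallSimplex c₂ (rr n) y yv j)).toReal
          ≤ (ENNReal.ofReal (C₀ * Real.exp (-(rr n ^ 2)/2))
              * volume (smallSimplex c₂ (rr n) y yv j)).toReal :=
        ENNReal.toReal_mono (ENNReal.mul_lt_top ENNReal.ofReal_lt_top hvol_fin).ne hup
      rw [ENNReal.toReal_mul, ENNReal.toReal_ofReal (by positivity), hvolR, hexpL] at h1
      refine le_trans h1 ?_
      have h2 : C₀ * (Real.sqrt L / n) * (K / rr n)
          ≤ C₀ * (Real.sqrt L / n) * (K / Real.sqrt L) := by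
        gcongr
      refine le_trans h2 (le_of_eq ?_)
      field_simp

end
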